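/- Let c be a generic linear list, f its piecewise linear map, and b an item with B = c_b. The connected component of the sublevel set f^{-1}((−∞, B]) containing b contains the left endpoint 1 of the domain if and only if c_q < B for every item q < b. (This characterizes the maxima that span windows whose wave is short on the left, i.e., the nodes of the left spine.) -/
import Mathlib


/-- The piecewise linear map determined by the list `c` (on the domain `[1,m]`). -/
noncomputable def plMap (c : ℕ → ℝ) (x : ℝ) : ℝ :=
  c (Int.floor x).toNat +
    (x - (Int.floor x : ℝ)) * (c ((Int.floor x).toNat + 1) - c (Int.floor x).toNat)

/-- The set of points of the domain `[1,m]` with values in `[A,B]`. -/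
def levelBand (m : ℕ) (c : ℕ → ℝ) (A B : ℝ) : Set ℝ :=
  {x : ℝ | x ∈ Set.Icc (1 : ℝ) (m : ℝ) ∧ plMap c x ∈ Set.Icc A B}

/-- The sublevel set of the map at `s`, within the domain `[1,m]`. -/
def sublevel (m : ℕ) (c : ℕ → ℝ) (s : ℝ) : Set ℝ :=
  {x : ℝ | x ∈ Set.Icc (1 : ℝ) (m : ℝ) ∧ plMap c x ≤ s}

/-- The support of the frame spanned by the items `a` and `b`: the connected component
of `f⁻¹([f a, f b])` (within the domain) containing `a`. -/
def frameSupport (m : ℕ) (c : ℕ → ℝ) (a b : ℕ) : Set ℝ :=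
  connectedComponentIn (levelBand m c (c a) (c b)) (a : ℝ)

/-- `W(a,b)` is a triple-panel window of the piecewise linear map of `c`:
`a` and `b` are items with `c a < c b` lying in a common connected component `[x,y]`
of `f⁻¹([c a, c b])`, and the value at the end of the support away from the mirror
equals `c a`. -/
def IsTPW (m : ℕ) (c : ℕ → ℝ) (a b : ℕ) : Prop :=
  1 ≤ a ∧ a ≤ m ∧ 1 ≤ b ∧ b ≤ m ∧ c a < c b ∧
  (b : ℝ) ∈ frameSupport m c a b ∧
  (if a < b then plMap c (sSup (frameSupport m c a b)) = c a
   else plMap c (sInf (frameSupport m c a b)) = c a)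

/-- `i` is an interior local minimum of the list `c`. -/
def IsLocMin (m : ℕ) (c : ℕ → ℝ) (i : ℕ) : Prop :=
  1 < i ∧ i < m ∧ c i < c (i - 1) ∧ c i < c (i + 1)

/-- `i` is an interior local maximum of the list `c`. -/
def IsLocMax (m : ℕ) (c : ℕ → ℝ) (i : ℕ) : Prop :=
  1 < i ∧ i < m ∧ c (i - 1) < c i ∧ c (i + 1) < c i

/-- `i` is a critical item that is a leaf: an endpoint or an interior local minimum. -/
def IsCritLeaf (m : ℕ) (c : ℕ → ℝ) (i : ℕ) : Prop :=
  i = 1 ∨ i = m ∨ IsLocMin m c i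

/-- `i` is a critical item of the list `c`. -/
def IsCritItem (m : ℕ) (c : ℕ → ℝ) (i : ℕ) : Prop :=
  IsCritLeaf m c i ∨ IsLocMax m c i

lemma plMap_natCast (c : ℕ → ℝ) (n : ℕ) : plMap c (n : ℝ) = c n := by
  simp [plMap]

lemma plMap_seg_le {c : ℕ → ℝ} {s : ℝ} (n : ℕ) (hn : c n ≤ s) (hn1 : c (n + 1) ≤ s)
    {x : ℝ} (hx1 : (n : ℝ) ≤ x) (hx2 : x ≤ (n : ℝ) + 1) : plMap c x ≤ s := by
  rcases eq_or_lt_of_le hx2 with h | h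
  · subst h
    have : ((n : ℝ) + 1) = ((n + 1 : ℕ) : ℝ) := by push_cast; ring
    rw [this, plMap_natCast]; exact hn1
  · have hfl : ⌊x⌋ = (n : ℤ) := by
      apply Int.floor_eq_iff.mpr
      constructor
      · exact_mod_cast hx1
      · exact_mod_cast h
    have : plMap c x = (1 - (x - n)) * c n + (x - n) * c (n + 1) := by
      rw [plMap, hfl]; simp only [Int.toNat_natCast]; push_cast; ring
    rw [this]
    have ht0 : 0 ≤ x - n := by linarith
    have ht1 : x - n ≤ 1 := by linarith
    calc (1 - (x - n)) * c n + (x - n) * c (n + 1)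
        ≤ (1 - (x - n)) * s + (x - n) * s := by
          apply add_le_add
          · exact mul_le_mul_of_nonneg_left hn (by linarith)
          · exact mul_le_mul_of_nonneg_left hn1 ht0
      _ = s := by ring
/-- For an item `b` of a generic linear list, the connected component
of the sublevel set `f⁻¹((-∞, c b])` containing `b` contains the left endpoint `1` of
the domain if and only if every item to the left of `b` has value smaller than `c b`. -/
theorem statement5 (m : ℕ) (hm : 2 ≤ m) (c : ℕ → ℝ)
    (hgen : Set.InjOn c (Set.Icc 1 m))
    (b : ℕ) (hb1 : 1 ≤ b) (hbm : b ≤ m) :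
    ((1 : ℝ) ∈ connectedComponentIn (sublevel m c (c b)) (b : ℝ)) ↔
      (∀ q, 1 ≤ q → q < b → c q < c b) := by
  have hbmem : (b : ℝ) ∈ sublevel m c (c b) := by
    refine ⟨⟨by exact_mod_cast hb1, by exact_mod_cast hbm⟩, ?_⟩
    rw [plMap_natCast]
  constructor
  · -- forward: if 1 is in the component, all items left of b are below c b
    intro h1 q hq1 hqb
    by_contra hle
    push_neg at hle
    have hne : c q ≠ c b := by
      apply hgen.ne ⟨hq1, le_trans (le_of_lt hqb) hbm⟩ ⟨hb1, hbm⟩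
      omega
    have hlt : c b < c q := lt_of_le_of_ne hle (Ne.symm hne)
    have hpre : IsPreconnected (connectedComponentIn (sublevel m c (c b)) (b : ℝ)) :=
      isPreconnected_connectedComponentIn
    have hord := hpre.ordConnected
    have hbC : (b : ℝ) ∈ connectedComponentIn (sublevel m c (c b)) (b : ℝ) :=
      mem_connectedComponentIn hbmem
    have hqC : (q : ℝ) ∈ connectedComponentIn (sublevel m c (c b)) (b : ℝ) := by
      apply hord.out h1 hbC
      constructor
      · exact_mod_cast hq1
      · exact_mod_cast le_of_lt hqb
    have := (connectedComponentIn_subset _ _ hqC).2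
    rw [plMap_natCast] at this
    linarith
  · -- backward: the interval [1, b] lies in the sublevel set
    intro h
    have hsub : Set.Icc (1 : ℝ) (b : ℝ) ⊆ sublevel m c (c b) := by
      rintro x ⟨hx1, hxb⟩
      refine ⟨⟨hx1, le_trans hxb (by exact_mod_cast hbm)⟩, ?_⟩
      have hfl1 : (1 : ℤ) ≤ ⌊x⌋ := by
        rw [Int.le_floor]; exact_mod_cast hx1
      set k := ⌊x⌋.toNat with hk
      have hkz : (k : ℤ) = ⌊x⌋ := Int.toNat_of_nonneg (by omega)
      have hk1 : 1 ≤ k := by omega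
      have hkx : (k : ℝ) ≤ x := by
        have := Int.floor_le x
        rw [← hkz] at this; exact_mod_cast this
      have hxk : x < (k : ℝ) + 1 := by
        have := Int.lt_floor_add_one x
        rw [← hkz] at this; exact_mod_cast this
      by_cases hkb : k + 1 ≤ b
      · apply plMap_seg_le k (le_of_lt (h k hk1 (by omega)))
        · rcases eq_or_lt_of_le hkb with he | hl
          · rw [he]
          · exact le_of_lt (h (k + 1) (by omega) hl)
        · exact hkx
        · exact le_of_lt hxk
      · -- k ≥ b, so x = b
        have hkb' : (b : ℝ) ≤ (k : ℝ) := by exact_mod_cast (by omega : b ≤ k)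
        have hxeq : x = (b : ℝ) := le_antisymm hxb (le_trans hkb' hkx)
        rw [hxeq, plMap_natCast]
    have hIcc : IsPreconnected (Set.Icc (1 : ℝ) (b : ℝ)) := isPreconnected_Icc
    have := hIcc.subset_connectedComponentIn
      (x := (b : ℝ)) ⟨by exact_mod_cast hb1, le_refl _⟩ hsub
    exact this ⟨le_refl _, by exact_mod_cast hb1⟩
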